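/- Let M_r = c·γ_r² r·S + E_r where S ≠ 0 is fixed, ‖E_r‖_∞ ≤ K γ_r³ r, c ≠ 0, γ_r > 0 with γ_r → 0. If γ_r ∉ Θ(1/√r) then either some subsequence of entries of M_r tends to 0 on every nonzero entry of S (collapse) or is unbounded (instability); i.e., M_r's entries fail to be Θ_r(1). -/

import Mathlib

open Filter Matrix Asymptotics

/-- If M_r = c γ_r² r S + E_r with S ≠ 0, ‖E_r‖_∞ ≤ K γ_r³ r, c ≠ 0,
    γ_r > 0, γ_r → 0, and γ ∉ Θ(1/√r), then the entries of M_r at nonzero entries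
    of S fail to be Θ_r(1) (they collapse or are unbounded). -/
theorem stmt_19 {d₁ d₂ : ℕ}
    (γ : ℕ → ℝ) (hγ : ∀ r, 0 < γ r) (hγ0 : Tendsto γ atTop (nhds 0))
    (c : ℝ) (hc : c ≠ 0) (K : ℝ) (hK : 0 < K)
    (S : Matrix (Fin d₁) (Fin d₂) ℝ) (hS : S ≠ 0)
    (M E : ℕ → Matrix (Fin d₁) (Fin d₂) ℝ)
    (hM : ∀ r : ℕ, M r = (c * (γ r) ^ 2 * r) • S + E r)
    (hE : ∀ r : ℕ, ∀ i j, |E r i j| ≤ K * (γ r) ^ 3 * r)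
    (hnot : ¬ γ =Θ[atTop] (fun r : ℕ => 1 / Real.sqrt r)) :
    ∀ i j, S i j ≠ 0 →
      ¬ (fun r : ℕ => M r i j) =Θ[atTop] (fun _ : ℕ => (1 : ℝ)) := by
  intro i j hSij h
  set s := |c * S i j| with hs_def
  have hs : 0 < s := abs_pos.mpr (mul_ne_zero hc hSij)
  obtain ⟨C1, hC1⟩ := h.isBigO.bound
  obtain ⟨C2, hC2⟩ := h.symm.isBigO.bound
  simp only [norm_one, mul_one, Real.norm_eq_abs] at hC1 hC2
  have hγsmall : ∀ᶠ r : ℕ in atTop, γ r < s / (2 * K) :=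
    hγ0.eventually_lt_const (by positivity)
  -- sandwich: (s/2) γ² r ≤ |M r i j| ≤ (3s/2) γ² r  eventually
  have hsand : ∀ᶠ r : ℕ in atTop,
      s / 2 * ((γ r) ^ 2 * r) ≤ |M r i j| ∧
      |M r i j| ≤ 3 * s / 2 * ((γ r) ^ 2 * r) := by
    filter_upwards [hγsmall, eventually_ge_atTop 1] with r hγr hr1
    have hMe : M r i j = c * (γ r) ^ 2 * r * S i j + E r i j := by
      rw [hM r]; simp [Matrix.add_apply, Matrix.smul_apply, smul_eq_mul]
    have hrpos : (0:ℝ) ≤ (r:ℝ) := Nat.cast_nonneg r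
    have hg := (hγ r).le
    have hEb : |E r i j| ≤ s / 2 * ((γ r) ^ 2 * r) := by
      have h1 := hE r i j
      have h2 : K * (γ r) ^ 3 * r = (K * γ r) * ((γ r) ^ 2 * r) := by ring
      have h3 : K * γ r ≤ s / 2 := by
        have := (mul_le_mul_of_nonneg_left hγr.le hK.le)
        calc K * γ r ≤ K * (s / (2 * K)) := by nlinarith
          _ = s / 2 := by field_simp
      nlinarith [sq_nonneg (γ r), mul_nonneg (sq_nonneg (γ r)) hrpos]
    have habs : |c * (γ r) ^ 2 * r * S i j| = s * ((γ r) ^ 2 * r) := by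
      have h0 : (0:ℝ) ≤ (γ r) ^ 2 * r := by positivity
      rw [hs_def, show c * (γ r) ^ 2 * (r:ℝ) * S i j
        = (c * S i j) * ((γ r) ^ 2 * r) by ring, abs_mul, abs_of_nonneg h0]
    constructor
    · have := abs_sub_abs_le_abs_sub (c * (γ r) ^ 2 * r * S i j + E r i j)
        (E r i j)
      rw [hMe]
      have h4 : |c * (γ r) ^ 2 * r * S i j| - |E r i j|
          ≤ |c * (γ r) ^ 2 * r * S i j + E r i j| := by
        have := abs_add_le (c * (γ r) ^ 2 * r * S i j + E r i j) (-(E r i j))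
        simp only [add_neg_cancel_right, abs_neg] at this
        linarith [this]
      rw [habs] at h4
      nlinarith
    · rw [hMe]
      calc |c * (γ r) ^ 2 * r * S i j + E r i j|
          ≤ |c * (γ r) ^ 2 * r * S i j| + |E r i j| := abs_add_le _ _
        _ ≤ s * ((γ r) ^ 2 * r) + s / 2 * ((γ r) ^ 2 * r) := by
            rw [habs]; linarith
        _ = 3 * s / 2 * ((γ r) ^ 2 * r) := by ring
  -- C2 > 0
  have hC2pos : 0 < C2 := by
    obtain ⟨r, hr⟩ := (hC2.and hsand).exists
    by_contra hle
    push_neg at hle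
    have : C2 * |M r i j| ≤ 0 :=
      mul_nonpos_of_nonpos_of_nonneg hle (abs_nonneg _)
    linarith [hr.1]
  -- upper and lower bounds on γ² r
  set A := 2 / (3 * C2 * s) with hA_def
  set B := 2 * C1 / s with hB_def
  have hApos : 0 < A := by positivity
  have hbounds : ∀ᶠ r : ℕ in atTop,
      A ≤ (γ r) ^ 2 * r ∧ (γ r) ^ 2 * r ≤ B := by
    filter_upwards [hsand, hC1, hC2] with r hsr h1 h2
    constructor
    · have : 1 ≤ C2 * (3 * s / 2 * ((γ r) ^ 2 * r)) := by
        calc (1:ℝ) ≤ C2 * |M r i j| := h2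
          _ ≤ C2 * (3 * s / 2 * ((γ r) ^ 2 * r)) := by
              exact mul_le_mul_of_nonneg_left hsr.2 hC2pos.le
      rw [hA_def]
      rw [div_le_iff₀ (by positivity)]
      nlinarith
    · have : s / 2 * ((γ r) ^ 2 * r) ≤ C1 := le_trans hsr.1 h1
      rw [hB_def, le_div_iff₀ hs]
      nlinarith
  have hBpos : 0 < B := by
    obtain ⟨r, hr⟩ := hbounds.exists
    linarith [hApos]
  -- now γ =Θ 1/√r, contradiction
  apply hnot
  constructor
  · rw [Asymptotics.isBigO_iff]
    refine ⟨Real.sqrt B, ?_⟩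
    filter_upwards [hbounds, eventually_ge_atTop 1] with r hr hr1
    have hrpos : (0:ℝ) < (r:ℝ) := by exact_mod_cast hr1
    have hsr : 0 < Real.sqrt r := Real.sqrt_pos.mpr hrpos
    rw [Real.norm_eq_abs, Real.norm_eq_abs, abs_of_pos (hγ r),
      abs_of_pos (by positivity : (0:ℝ) < 1 / Real.sqrt r)]
    rw [mul_one_div, le_div_iff₀ hsr]
    have : γ r * Real.sqrt r = Real.sqrt ((γ r) ^ 2 * r) := by
      rw [Real.sqrt_mul (sq_nonneg _), Real.sqrt_sq (hγ r).le]
    rw [this]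
    exact Real.sqrt_le_sqrt hr.2
  · rw [Asymptotics.isBigO_iff]
    refine ⟨1 / Real.sqrt A, ?_⟩
    filter_upwards [hbounds, eventually_ge_atTop 1] with r hr hr1
    have hrpos : (0:ℝ) < (r:ℝ) := by exact_mod_cast hr1
    have hsr : 0 < Real.sqrt r := Real.sqrt_pos.mpr hrpos
    have hsA : 0 < Real.sqrt A := Real.sqrt_pos.mpr hApos
    rw [Real.norm_eq_abs, Real.norm_eq_abs, abs_of_pos (hγ r),
      abs_of_pos (by positivity : (0:ℝ) < 1 / Real.sqrt r)]
    rw [div_le_iff₀ hsr]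
    have h1 : γ r * Real.sqrt r = Real.sqrt ((γ r) ^ 2 * r) := by
      rw [Real.sqrt_mul (sq_nonneg _), Real.sqrt_sq (hγ r).le]
    have key : Real.sqrt A ≤ γ r * Real.sqrt r := by
      rw [h1]; exact Real.sqrt_le_sqrt hr.1
    calc (1:ℝ) = Real.sqrt A * (1 / Real.sqrt A) := by field_simp
      _ ≤ (γ r * Real.sqrt r) * (1 / Real.sqrt A) :=
          mul_le_mul_of_nonneg_right key (by positivity)
      _ = 1 / Real.sqrt A * γ r * Real.sqrt r := by ring
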